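/- Assume the pair (A,B) is reachable. Let w : ℕ → ℂ be square-summable (the coefficient sequence of a function W ∈ H₂), let Λ > 0 be a real number, and let Σ be an n×n complex matrix. Define H = ∑_{k=0}^∞ conj(w_k) Aᵏ B (the Markov interpolation data), c_k = ∑_{j=0}^{k} A^{k−j} B w_j (the power-series coefficients of G·W), and ℋ = ∑_{k=0}^∞ Aᵏ H B* (A*)ᵏ. If the covariance constraint Σ = Λ ∑_{k=0}^∞ c_k c_k* holds (with the series converging), then Σ − Λ ℋ* 𝒢⁻¹ ℋ is positive semidefinite, where 𝒢 = ∑_{k=0}^∞ Aᵏ B B* (A*)ᵏ. -/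

import Mathlib

open Matrix Finset Filter
open scoped ComplexOrder ENNReal NNReal

set_option linter.unusedSectionVars false
namespace CovAux

attribute [local instance] Matrix.frobeniusSeminormedAddCommGroup
  Matrix.frobeniusNormedAddCommGroup Matrix.frobeniusNormedSpace
  Matrix.frobeniusNormedRing Matrix.frobeniusNormedAlgebra

variable {p q r : Type*} [Fintype p] [Fintype q] [Fintype r]

/-- left multiplication as an `AddMonoidHom` -/
noncomputable def mulLeftHom (M : Matrix p q ℂ) : Matrix q r ℂ →+ Matrix p r ℂ where
  toFun N := M * N
  map_zero' := by simp
  map_add' x y := by simp [Matrix.mul_add]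

/-- right multiplication as an `AddMonoidHom` -/
noncomputable def mulRightHom (M : Matrix q r ℂ) : Matrix p q ℂ →+ Matrix p r ℂ where
  toFun N := N * M
  map_zero' := by simp
  map_add' x y := by simp [Matrix.add_mul]

lemma summable_mulLeft (M : Matrix p q ℂ) {f : ℕ → Matrix q r ℂ} (hf : Summable f) :
    Summable fun k => M * f k :=
  hf.map (mulLeftHom (r := r) M) (continuous_const.matrix_mul continuous_id)

lemma tsum_mulLeft (M : Matrix p q ℂ) {f : ℕ → Matrix q r ℂ} (hf : Summable f) :
    ∑' k, M * f k = M * ∑' k, f k :=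
  (hf.hasSum.map (mulLeftHom (r := r) M) (continuous_const.matrix_mul continuous_id)).tsum_eq

lemma summable_mulRight (M : Matrix q r ℂ) {f : ℕ → Matrix p q ℂ} (hf : Summable f) :
    Summable fun k => f k * M :=
  hf.map (mulRightHom (p := p) M) (continuous_id.matrix_mul continuous_const)

lemma tsum_mulRight (M : Matrix q r ℂ) {f : ℕ → Matrix p q ℂ} (hf : Summable f) :
    ∑' k, f k * M = (∑' k, f k) * M :=
  (hf.hasSum.map (mulRightHom (p := p) M) (continuous_id.matrix_mul continuous_const)).tsum_eq

/-- the quadratic form as an `AddMonoidHom` -/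
noncomputable def dotHom (x : p → ℂ) : Matrix p p ℂ →+ ℂ where
  toFun M := star x ⬝ᵥ (M *ᵥ x)
  map_zero' := by simp
  map_add' M N := by simp [Matrix.add_mulVec, dotProduct_add]

lemma continuous_dotHom (x : p → ℂ) : Continuous (dotHom (p := p) x) :=
  continuous_const.dotProduct (continuous_id.matrix_mulVec continuous_const)

lemma summable_dot (x : p → ℂ) {f : ℕ → Matrix p p ℂ} (hf : Summable f) :
    Summable fun k => star x ⬝ᵥ (f k *ᵥ x) :=
  hf.map (dotHom x) (continuous_dotHom x)

lemma tsum_dot (x : p → ℂ) {f : ℕ → Matrix p p ℂ} (hf : Summable f) :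
    star x ⬝ᵥ ((∑' k, f k) *ᵥ x) = ∑' k, star x ⬝ᵥ (f k *ᵥ x) :=
  ((hf.hasSum.map (dotHom x) (continuous_dotHom x)).tsum_eq).symm

lemma dot_mul_conjTranspose_self (P : Matrix p q ℂ) (x : p → ℂ) :
    star x ⬝ᵥ ((P * Pᴴ) *ᵥ x) = star (Pᴴ *ᵥ x) ⬝ᵥ (Pᴴ *ᵥ x) := by
  rw [← Matrix.mulVec_mulVec, Matrix.dotProduct_mulVec, Matrix.star_mulVec,
    Matrix.conjTranspose_conjTranspose]


lemma exists_pow_norm_le {N : ℕ} (hn : 1 ≤ N) (A : Matrix (Fin N) (Fin N) ℂ)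
    (hA : ∀ μ ∈ spectrum ℂ A, ‖μ‖ < 1) :
    ∃ C t : ℝ, 0 < C ∧ 0 < t ∧ t < 1 ∧ ∀ k, ‖A ^ k‖ ≤ C * t ^ k := by
  haveI : Nonempty (Fin N) := ⟨⟨0, hn⟩⟩
  haveI : CompleteSpace (Matrix (Fin N) (Fin N) ℂ) :=
    FiniteDimensional.complete ℂ (Matrix (Fin N) (Fin N) ℂ)
  have h1 : spectralRadius ℂ A < 1 := by
    have := spectrum.spectralRadius_lt_of_forall_lt (a := A) (r := 1)
      (fun z hz => by
        have := hA z hz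
        exact_mod_cast this)
    simpa using this
  obtain ⟨t, htρ, ht1⟩ := ENNReal.lt_iff_exists_nnreal_btwn.mp h1
  have ht0 : 0 < t := by
    rcases eq_or_lt_of_le (zero_le : (0 : ℝ≥0) ≤ t) with h | h
    · exfalso; rw [← h] at htρ; simp at htρ
    · exact h
  have h2 := spectrum.pow_nnnorm_pow_one_div_tendsto_nhds_spectralRadius A
  have h3 : ∀ᶠ k : ℕ in atTop, (‖A ^ k‖₊ : ℝ≥0∞) ^ (1 / (k : ℝ)) < (t : ℝ≥0∞) :=
    h2.eventually_lt_const htρ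
  obtain ⟨N₀, hN₀⟩ := Filter.eventually_atTop.mp h3
  have key : ∀ k, N₀ ≤ k → 1 ≤ k → ‖A ^ k‖ ≤ (t : ℝ) ^ k := by
    intro k hk hk1
    have hlt := hN₀ k hk
    have hkne : (k : ℝ) ≠ 0 := by positivity
    have h4 : ((‖A ^ k‖₊ : ℝ≥0∞) ^ (1 / (k : ℝ))) ^ (k : ℝ) ≤ (t : ℝ≥0∞) ^ (k : ℝ) :=
      ENNReal.rpow_le_rpow hlt.le (by positivity)
    rw [← ENNReal.rpow_mul, one_div, inv_mul_cancel₀ hkne, ENNReal.rpow_one] at h4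
    have h6 : ‖A ^ k‖₊ ≤ t ^ k := by
      rw [ENNReal.rpow_natCast, ← ENNReal.coe_pow, ENNReal.coe_le_coe] at h4; exact h4
    calc ‖A ^ k‖ = ((‖A ^ k‖₊ : ℝ≥0) : ℝ) := rfl
      _ ≤ ((t ^ k : ℝ≥0) : ℝ) := by exact_mod_cast h6
      _ = (t : ℝ) ^ k := by push_cast; ring
  set M := max N₀ 1 with hM
  set C : ℝ := (∑ i ∈ Finset.range (M + 1), ‖A ^ i‖ / (t : ℝ) ^ i) + 1 with hC
  have hsum_nonneg : 0 ≤ ∑ i ∈ Finset.range (M + 1), ‖A ^ i‖ / (t : ℝ) ^ i :=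
    Finset.sum_nonneg fun i _ => by positivity
  have hC1 : 1 ≤ C := by rw [hC]; linarith
  refine ⟨C, t, by linarith, ht0, by exact_mod_cast ht1, fun k => ?_⟩
  by_cases hk : k ≤ M
  · have hmem : k ∈ Finset.range (M + 1) := Finset.mem_range.mpr (Nat.lt_succ_of_le hk)
    have h7 : ‖A ^ k‖ / (t : ℝ) ^ k ≤ C := by
      refine le_trans (Finset.single_le_sum (f := fun i => ‖A ^ i‖ / (t : ℝ) ^ i)
        (fun i _ => by positivity) hmem) (by linarith)
    have htk : (0 : ℝ) < (t : ℝ) ^ k := by positivity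
    calc ‖A ^ k‖ = (‖A ^ k‖ / (t : ℝ) ^ k) * (t : ℝ) ^ k := by field_simp
      _ ≤ C * (t : ℝ) ^ k := mul_le_mul_of_nonneg_right h7 htk.le
  · push_neg at hk
    have := key k (le_trans (le_max_left _ _) hk.le) (le_trans (le_max_right _ _) hk.le)
    calc ‖A ^ k‖ ≤ (t : ℝ) ^ k := this
      _ ≤ C * (t : ℝ) ^ k := le_mul_of_one_le_left (by positivity) hC1


theorem main
    {n : ℕ} (hn : 1 ≤ n)
    (A : Matrix (Fin n) (Fin n) ℂ) (B : Matrix (Fin n) (Fin 1) ℂ)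
    (hA : ∀ μ ∈ spectrum ℂ A, ‖μ‖ < 1)
    (hreach : IsUnit (Matrix.of fun (i : Fin n) (j : Fin n) => (A ^ (j : ℕ) * B) i 0))
    (w : ℕ → ℂ) (hw : Summable fun k => ‖w k‖ ^ 2)
    (Λ : ℝ) (hΛ : 0 < Λ)
    (S : Matrix (Fin n) (Fin n) ℂ)
    (H : Matrix (Fin n) (Fin 1) ℂ)
    (hH : H = ∑' k : ℕ, (starRingEnd ℂ) (w k) • (A ^ k * B))
    (c : ℕ → Matrix (Fin n) (Fin 1) ℂ)
    (hc : ∀ k, c k = ∑ j ∈ Finset.range (k + 1), w j • (A ^ (k - j) * B))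
    (ℋ : Matrix (Fin n) (Fin n) ℂ)
    (hℋ : ℋ = ∑' k : ℕ, A ^ k * H * Bᴴ * (Aᴴ) ^ k)
    (hsum : Summable fun k => c k * (c k)ᴴ)
    (hS : S = (Λ : ℂ) • ∑' k : ℕ, c k * (c k)ᴴ) :
    (S - (Λ : ℂ) • (ℋᴴ * (∑' k : ℕ, A ^ k * B * Bᴴ * (Aᴴ) ^ k)⁻¹ * ℋ)).PosSemidef := by
  haveI : Nonempty (Fin n) := ⟨⟨0, hn⟩⟩
  haveI : CompleteSpace (Matrix (Fin n) (Fin n) ℂ) :=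
    FiniteDimensional.complete ℂ (Matrix (Fin n) (Fin n) ℂ)
  obtain ⟨C, t, hC, ht0, ht1, hbound⟩ := exists_pow_norm_le hn A hA
  have hbound' : ∀ k, ‖(Aᴴ) ^ k‖ ≤ C * t ^ k := fun k => by
    rw [← Matrix.conjTranspose_pow, Matrix.frobenius_norm_conjTranspose]; exact hbound k
  -- the sequence u with sum 𝒢
  set u : ℕ → Matrix (Fin n) (Fin n) ℂ := fun k => A ^ k * B * Bᴴ * (Aᴴ) ^ k with hu_def
  have hnorm_u : ∀ k, ‖u k‖ ≤ C * C * (‖B‖ * ‖B‖) * (t * t) ^ k := by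
    intro k
    have h1 : ‖u k‖ ≤ ‖A ^ k‖ * ‖B‖ * ‖Bᴴ‖ * ‖(Aᴴ) ^ k‖ := by
      calc ‖u k‖ ≤ ‖A ^ k * B * Bᴴ‖ * ‖(Aᴴ) ^ k‖ := Matrix.frobenius_norm_mul _ _
        _ ≤ ‖A ^ k * B‖ * ‖Bᴴ‖ * ‖(Aᴴ) ^ k‖ := by
            gcongr; exact Matrix.frobenius_norm_mul _ _
        _ ≤ ‖A ^ k‖ * ‖B‖ * ‖Bᴴ‖ * ‖(Aᴴ) ^ k‖ := by
            gcongr ?_ * _ * _; exact Matrix.frobenius_norm_mul _ _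
    have h2 : ‖Bᴴ‖ = ‖B‖ := Matrix.frobenius_norm_conjTranspose _
    calc ‖u k‖ ≤ ‖A ^ k‖ * ‖B‖ * ‖Bᴴ‖ * ‖(Aᴴ) ^ k‖ := h1
      _ ≤ (C * t ^ k) * ‖B‖ * ‖B‖ * (C * t ^ k) := by
          rw [h2]; gcongr ?_ * _ * _ * ?_ <;> [exact hbound k; exact hbound' k]
      _ = C * C * (‖B‖ * ‖B‖) * (t * t) ^ k := by rw [mul_pow]; ring
  have hsum_norm_u : Summable fun k => ‖u k‖ := by
    refine Summable.of_nonneg_of_le (fun _ => norm_nonneg _) hnorm_u ?_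
    exact (summable_geometric_of_lt_one (by positivity) (by nlinarith)).mul_left _
  have hsum_u : Summable u := hsum_norm_u.of_norm
  -- bound on w
  set W := Real.sqrt (∑' j : ℕ, ‖w j‖ ^ 2) with hW
  have hwb : ∀ k, ‖w k‖ ≤ W := by
    intro k
    have h1 : ‖w k‖ ^ 2 ≤ ∑' j : ℕ, ‖w j‖ ^ 2 := hw.le_tsum k fun j _ => sq_nonneg _
    have h2 := Real.sqrt_le_sqrt h1
    rwa [Real.sqrt_sq (norm_nonneg _)] at h2
  have hW0 : 0 ≤ W := Real.sqrt_nonneg _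
  -- the sequence v with sum V
  set v : ℕ → Matrix (Fin n) (Fin n) ℂ := fun j => (starRingEnd ℂ) (w j) • A ^ j with hv_def
  have hnorm_v : ∀ j, ‖v j‖ ≤ W * C * t ^ j := by
    intro j
    rw [hv_def]
    calc ‖(starRingEnd ℂ) (w j) • A ^ j‖ = ‖w j‖ * ‖A ^ j‖ := by
          rw [norm_smul, RCLike.norm_conj]
      _ ≤ W * (C * t ^ j) := by gcongr; exacts [hwb j, hbound j]
      _ = W * C * t ^ j := by ring
  have hsum_norm_v : Summable fun j => ‖v j‖ := by
    refine Summable.of_nonneg_of_le (fun _ => norm_nonneg _) hnorm_v ?_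
    exact ((summable_geometric_of_lt_one ht0.le ht1).mul_left _)
  have hsum_v : Summable v := hsum_norm_v.of_norm
  set V := ∑' j, v j with hV
  -- H = V * B
  have hH2 : H = V * B := by
    rw [hH, hV, ← tsum_mulRight B hsum_v]
    exact tsum_congr fun j => by rw [hv_def, Matrix.smul_mul]
  -- A ^ k commutes with V
  have hcomm : ∀ k, A ^ k * V = V * A ^ k := by
    intro k
    rw [hV, ← tsum_mulLeft (A ^ k) hsum_v, ← tsum_mulRight (A ^ k) hsum_v]
    refine tsum_congr fun j => ?_
    rw [hv_def, Matrix.mul_smul, Matrix.smul_mul, ← pow_add, ← pow_add, Nat.add_comm]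
  -- ℋ = V * 𝒢
  have hHc : ℋ = V * ∑' k, u k := by
    rw [hℋ, ← tsum_mulLeft V hsum_u]
    refine tsum_congr fun k => ?_
    rw [hH2, show A ^ k * (V * B) = V * (A ^ k * B) by
      rw [← Matrix.mul_assoc, hcomm, Matrix.mul_assoc]]
    rw [hu_def]
    simp only [Matrix.mul_assoc]
  -- Cauchy product: ∑' k, A^k B (c k)ᴴ = V * 𝒢
  have hterm : ∀ k, (∑ j ∈ Finset.range (k + 1), v j * u (k - j)) = A ^ k * B * (c k)ᴴ := by
    intro k
    rw [hc k, Matrix.conjTranspose_sum, Matrix.mul_sum]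
    refine Finset.sum_congr rfl fun j hj => ?_
    have hj' : j ≤ k := Nat.lt_succ_iff.mp (Finset.mem_range.mp hj)
    rw [hv_def, hu_def]
    simp only [Matrix.conjTranspose_smul, Matrix.conjTranspose_mul, Matrix.smul_mul,
      Matrix.mul_smul, starRingEnd_apply]
    congr 1
    simp only [← Matrix.mul_assoc, ← pow_add]
    rw [Nat.add_sub_cancel' hj', Matrix.conjTranspose_pow]
  have hsum_cterm : Summable fun k => A ^ k * B * (c k)ᴴ :=
    (summable_congr hterm).mp (summable_norm_sum_mul_range_of_summable_norm
      hsum_norm_v hsum_norm_u).of_norm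
  have hHsum : ℋ = ∑' k, A ^ k * B * (c k)ᴴ := by
    rw [hHc, hV, ← tsum_congr hterm]
    exact tsum_mul_tsum_eq_tsum_sum_range_of_summable_norm hsum_norm_v hsum_norm_u
  -- 𝒢 is Hermitian
  set Gm := ∑' k, u k with hGm
  have hGH : Gmᴴ = Gm := by
    rw [hGm, Matrix.conjTranspose_tsum]
    refine tsum_congr fun k => ?_
    rw [hu_def]
    simp only [Matrix.conjTranspose_mul, Matrix.conjTranspose_conjTranspose,
      Matrix.conjTranspose_pow, Matrix.conjTranspose_conjTranspose, Matrix.mul_assoc]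
  -- quadratic form of each u k
  have hudot : ∀ (x : Fin n → ℂ) k,
      star x ⬝ᵥ (u k *ᵥ x) = star ((A ^ k * B)ᴴ *ᵥ x) ⬝ᵥ ((A ^ k * B)ᴴ *ᵥ x) := by
    intro x k
    rw [show u k = (A ^ k * B) * (A ^ k * B)ᴴ by
      rw [hu_def]; simp only [Matrix.conjTranspose_mul, Matrix.conjTranspose_pow,
        Matrix.mul_assoc]]
    exact dot_mul_conjTranspose_self _ _
  -- 𝒢 is invertible
  have hdet : IsUnit Gm.det := by
    rw [isUnit_iff_ne_zero]
    intro hdet0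
    obtain ⟨x, hx0, hGx⟩ := (Matrix.exists_mulVec_eq_zero_iff).mpr hdet0
    have hsdot := summable_dot x hsum_u
    have h0 : ∑' k, star x ⬝ᵥ (u k *ᵥ x) = 0 := by
      rw [← tsum_dot x hsum_u, ← hGm, hGx]
      simp
    have hnn : ∀ k, 0 ≤ star x ⬝ᵥ (u k *ᵥ x) := fun k => by
      rw [hudot]; exact dotProduct_star_self_nonneg _
    have hts : ∀ k, star x ⬝ᵥ (u k *ᵥ x) = 0 := by
      intro k
      have hle := hsdot.le_tsum k fun j _ => hnn j
      rw [h0] at hle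
      exact le_antisymm hle (hnn k)
    have hy : ∀ k : ℕ, (A ^ k * B)ᴴ *ᵥ x = 0 := fun k =>
      dotProduct_star_self_eq_zero.mp (by rw [← hudot x k]; exact hts k)
    set Γ : Matrix (Fin n) (Fin n) ℂ :=
      Matrix.of fun (i : Fin n) (j : Fin n) => (A ^ (j : ℕ) * B) i 0 with hΓ
    have hΓH : IsUnit Γᴴ := by
      rw [Matrix.isUnit_iff_isUnit_det, Matrix.det_conjTranspose]
      exact ((Matrix.isUnit_iff_isUnit_det _).mp hreach).star
    have hΓx : Γᴴ *ᵥ x = 0 := by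
      funext j
      have h5 := congrFun (hy (j : ℕ)) 0
      simpa [Matrix.mulVec, dotProduct, Matrix.conjTranspose_apply, hΓ] using h5
    apply hx0
    have h6 := congrArg (fun vv => Γᴴ⁻¹ *ᵥ vv) hΓx
    simpa [Matrix.mulVec_mulVec, Matrix.nonsing_inv_mul _
      ((Matrix.isUnit_iff_isUnit_det _).mp hΓH)] using h6
  have hGinv : Gm⁻¹ * Gm = 1 := Matrix.nonsing_inv_mul _ hdet
  have hGinvH : (Gm⁻¹)ᴴ = Gm⁻¹ := by rw [Matrix.conjTranspose_nonsing_inv, hGH]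
  -- the residual sequence
  set M0 := ℋᴴ * Gm⁻¹ with hM0
  set d : ℕ → Matrix (Fin n) (Fin 1) ℂ := fun k => c k - M0 * (A ^ k * B) with hd
  have hs2 : Summable fun k => M0 * (A ^ k * B) * (c k)ᴴ := by
    have h := summable_mulLeft M0 hsum_cterm
    simpa only [Matrix.mul_assoc] using h
  have hs3 : Summable fun k => c k * (M0 * (A ^ k * B))ᴴ := by
    have h := hs2.matrix_conjTranspose
    simpa only [Matrix.conjTranspose_mul, Matrix.conjTranspose_conjTranspose,
      Matrix.mul_assoc] using h
  have hs4 : Summable fun k => M0 * u k * M0ᴴ :=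
    summable_mulRight M0ᴴ (summable_mulLeft M0 hsum_u)
  have hmm : ∀ k, M0 * (A ^ k * B) * (M0 * (A ^ k * B))ᴴ = M0 * u k * M0ᴴ := by
    intro k
    rw [hu_def]
    simp only [Matrix.conjTranspose_mul, Matrix.conjTranspose_pow, Matrix.mul_assoc]
  have hdd : ∀ k, d k * (d k)ᴴ =
      (c k * (c k)ᴴ - c k * (M0 * (A ^ k * B))ᴴ) -
        (M0 * (A ^ k * B) * (c k)ᴴ - M0 * u k * M0ᴴ) := by
    intro k
    rw [hd]
    simp only [Matrix.conjTranspose_sub, Matrix.sub_mul, Matrix.mul_sub, hmm k]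
    abel
  have hsdd : Summable fun k => d k * (d k)ᴴ :=
    (summable_congr hdd).mpr ((hsum.sub hs3).sub (hs2.sub hs4))
  -- sum of residuals
  have e2 : ∑' k, M0 * (A ^ k * B) * (c k)ᴴ = M0 * ℋ := by
    rw [hHsum, ← tsum_mulLeft M0 hsum_cterm]
    exact tsum_congr fun k => by rw [Matrix.mul_assoc]
  have e3 : ∑' k, c k * (M0 * (A ^ k * B))ᴴ = ℋᴴ * M0ᴴ := by
    have h := congrArg Matrix.conjTranspose e2
    rw [Matrix.conjTranspose_tsum] at h
    simpa only [Matrix.conjTranspose_mul, Matrix.conjTranspose_conjTranspose,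
      Matrix.mul_assoc] using h
  have e4 : ∑' k, M0 * u k * M0ᴴ = M0 * Gm * M0ᴴ := by
    rw [hGm, ← tsum_mulLeft M0 hsum_u, ← tsum_mulRight M0ᴴ (summable_mulLeft M0 hsum_u)]
  have hM0H : M0ᴴ = Gm⁻¹ * ℋ := by
    rw [hM0, Matrix.conjTranspose_mul, hGinvH, Matrix.conjTranspose_conjTranspose]
  have hT : ∑' k, d k * (d k)ᴴ = (∑' k, c k * (c k)ᴴ) - ℋᴴ * Gm⁻¹ * ℋ := by
    rw [tsum_congr hdd, (hsum.sub hs3).tsum_sub (hs2.sub hs4), hsum.tsum_sub hs3,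
      hs2.tsum_sub hs4, e2, e3, e4]
    have q1 : ℋᴴ * M0ᴴ = ℋᴴ * Gm⁻¹ * ℋ := by rw [hM0H, ← Matrix.mul_assoc]
    have q2 : M0 * ℋ = ℋᴴ * Gm⁻¹ * ℋ := by rw [hM0]
    have q3 : M0 * Gm * M0ᴴ = ℋᴴ * Gm⁻¹ * ℋ := by
      rw [hM0H, hM0, Matrix.mul_assoc ℋᴴ Gm⁻¹ Gm, hGinv, Matrix.mul_one,
        ← Matrix.mul_assoc]
    rw [q1, q2, q3]
    abel
  -- final identity
  have hmain : S - (Λ : ℂ) • (ℋᴴ * (∑' k : ℕ, A ^ k * B * Bᴴ * (Aᴴ) ^ k)⁻¹ * ℋ)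
      = (Λ : ℂ) • ∑' k, d k * (d k)ᴴ := by
    rw [hT, hS, smul_sub]
  rw [hmain, Matrix.posSemidef_iff_dotProduct_mulVec]
  constructor
  · -- Hermitian
    have hj : ∀ k, (d k * (d k)ᴴ)ᴴ = d k * (d k)ᴴ := fun k => by
      simp [Matrix.conjTranspose_mul]
    show _ = _
    rw [Matrix.conjTranspose_smul, Matrix.conjTranspose_tsum, tsum_congr hj]
    congr 1
    simp [Complex.star_def, Complex.conj_ofReal]
  · intro x
    rw [Matrix.smul_mulVec, dotProduct_smul, tsum_dot x hsdd]
    have hnn : ∀ k, 0 ≤ star x ⬝ᵥ ((d k * (d k)ᴴ) *ᵥ x) := fun k => by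
      rw [dot_mul_conjTranspose_self]
      exact dotProduct_star_self_nonneg _
    have h7 : 0 ≤ ∑' k, star x ⬝ᵥ ((d k * (d k)ᴴ) *ᵥ x) := tsum_nonneg hnn
    have h8 : (0 : ℂ) ≤ (Λ : ℂ) := by
      rw [Complex.le_def]
      simp [hΛ.le]
    calc (0 : ℂ) = (Λ : ℂ) • (0 : ℂ) := by simp
      _ ≤ (Λ : ℂ) • ∑' k, star x ⬝ᵥ ((d k * (d k)ᴴ) *ᵥ x) := by
          rw [smul_eq_mul, smul_eq_mul, mul_zero]
          exact mul_nonneg h8 h7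

end CovAux

/-- With `(A,B)` reachable, if `W ∈ H₂` has coefficients `w`, the Markov
data is `H = ∑ conj(w_k) Aᵏ B`, the coefficients of `G·W` are
`c_k = ∑_{j≤k} A^{k−j} B w_j`, and the covariance constraint `S = Λ ∑ c_k c_k*` holds,
then `S − Λ ℋ* 𝒢⁻¹ ℋ ⪰ 0`, where `ℋ = ∑ Aᵏ H B* (A*)ᵏ` and `𝒢 = ∑ Aᵏ B B* (A*)ᵏ`. -/
theorem covariance_constraint_implies_posSemidef
    {n : ℕ} (hn : 1 ≤ n)
    (A : Matrix (Fin n) (Fin n) ℂ) (B : Matrix (Fin n) (Fin 1) ℂ)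
    (hA : ∀ μ ∈ spectrum ℂ A, ‖μ‖ < 1)
    (hreach : IsUnit (Matrix.of fun (i : Fin n) (j : Fin n) => (A ^ (j : ℕ) * B) i 0))
    (w : ℕ → ℂ) (hw : Summable fun k => ‖w k‖ ^ 2)
    (Λ : ℝ) (hΛ : 0 < Λ)
    (S : Matrix (Fin n) (Fin n) ℂ)
    (H : Matrix (Fin n) (Fin 1) ℂ)
    (hH : H = ∑' k : ℕ, (starRingEnd ℂ) (w k) • (A ^ k * B))
    (c : ℕ → Matrix (Fin n) (Fin 1) ℂ)
    (hc : ∀ k, c k = ∑ j ∈ Finset.range (k + 1), w j • (A ^ (k - j) * B))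
    (ℋ : Matrix (Fin n) (Fin n) ℂ)
    (hℋ : ℋ = ∑' k : ℕ, A ^ k * H * Bᴴ * (Aᴴ) ^ k)
    (hsum : Summable fun k => c k * (c k)ᴴ)
    (hS : S = (Λ : ℂ) • ∑' k : ℕ, c k * (c k)ᴴ) :
    (S - (Λ : ℂ) • (ℋᴴ * (∑' k : ℕ, A ^ k * B * Bᴴ * (Aᴴ) ^ k)⁻¹ * ℋ)).PosSemidef :=
  CovAux.main hn A B hA hreach w hw Λ hΛ S H hH c hc ℋ hℋ hsum hS
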